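/- Fix n ≥ 2. Conjugation by S(n) maps the subgroup of 2^n×2^n unitaries generated by Z^{(1)}, …, Z^{(n−1)}, X^{(n)} onto G^{(n)}_tetra; that is, { S(n) U S(n)⁻¹ : U ∈ ⟨Z^{(1)}, …, Z^{(n−1)}, X^{(n)}⟩ } = G^{(n)}_tetra. In particular these two groups are isomorphic. -/

import Mathlib

open Matrix Complex

noncomputable section

/-- `n`-qubit operators: matrices indexed by bit strings (qubit `j` ↔ index `j`,
qubit 1 most significant corresponds to index `0`). -/
abbrev QMat (n : ℕ) := Matrix (Fin n → Fin 2) (Fin n → Fin 2) ℂ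
/-- `n`-qubit state vectors. -/
abbrev QVec (n : ℕ) := (Fin n → Fin 2) → ℂ

def Xg : Matrix (Fin 2) (Fin 2) ℂ := !![0, 1; 1, 0]
def Yg : Matrix (Fin 2) (Fin 2) ℂ := !![0, -Complex.I; Complex.I, 0]
def Zg : Matrix (Fin 2) (Fin 2) ℂ := !![1, 0; 0, -1]
def Hg : Matrix (Fin 2) (Fin 2) ℂ := (((Real.sqrt 2)⁻¹ : ℝ) : ℂ) • !![1, 1; 1, -1]

/-- Kronecker product of a family of single-qubit operators. -/
def kronFam (n : ℕ) (A : Fin n → Matrix (Fin 2) (Fin 2) ℂ) : QMat n :=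
  fun v w => ∏ j, A j (v j) (w j)

/-- The single-qubit operator `A` acting on qubit `i` (identity elsewhere). -/
def onQubit (n : ℕ) (A : Matrix (Fin 2) (Fin 2) ℂ) (i : Fin n) : QMat n :=
  kronFam n (fun j => if j = i then A else 1)

/-- Controlled-NOT with control qubit `c` and target qubit `t`. -/
def CNOT (n : ℕ) (c t : Fin n) : QMat n :=
  fun v w => if v = Function.update w t (w t + w c) then 1 else 0

/-- `S(n) = CNOT_{2→1} CNOT_{3→2} ⋯ CNOT_{n→n−1}` (0-based indices). -/
def Sn (n : ℕ) : QMat n :=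
  ((List.finRange (n - 1)).map (fun j =>
    CNOT n ⟨j.1 + 1, by have := j.isLt; omega⟩ ⟨j.1, by have := j.isLt; omega⟩)).prod

/-- Computational basis vector `|g⟩`. -/
def ket (n : ℕ) (g : Fin n → Fin 2) : QVec n := fun v => if v = g then 1 else 0

/-- Inner product (conjugate-linear in the first argument). -/
def qip {n : ℕ} (v w : QVec n) : ℂ := ∑ x, star (v x) * w x

/-- The generator `Z^{(j)} Z^{(j+1)}` (0-based `j`). -/
def ZZ (n : ℕ) (j : Fin (n - 1)) : QMat n :=
  onQubit n Zg ⟨j.1, by have := j.isLt; omega⟩ *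
    onQubit n Zg ⟨j.1 + 1, by have := j.isLt; omega⟩

/-- `X^{⊗n}`. -/
def XXn (n : ℕ) : QMat n := kronFam n (fun _ => Xg)

/-- `U_g = (Z⁽¹⁾Z⁽²⁾)^{g₁} ⋯ (Z⁽ⁿ⁻¹⁾Z⁽ⁿ⁾)^{g_{n−1}} (X^{⊗n})^{g_n}`. -/
def Ug (n : ℕ) (hn : 0 < n) (g : Fin n → Fin 2) : QMat n :=
  ((List.finRange (n - 1)).map (fun j =>
    ZZ n j ^ ((g (Fin.castLE (Nat.sub_le n 1) j)).val))).prod *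
    XXn n ^ ((g ⟨n - 1, by omega⟩).val)

/-- The group `G⁽ⁿ⁾_tetra` generated by the `Z⁽ⁱ⁾Z⁽ⁱ⁺¹⁾` and `X^{⊗n}`
(all generators are involutions, so the multiplicative closure is a group). -/
def Gtetra (n : ℕ) : Submonoid (QMat n) :=
  Submonoid.closure ({ M | ∃ j : Fin (n - 1), M = ZZ n j } ∪ {XXn n})

/-- `n`-fold Kronecker products of `I, X, Y, Z`. -/
def PauliSet (n : ℕ) : Set (QMat n) :=
  { M | ∃ A : Fin n → Matrix (Fin 2) (Fin 2) ℂ,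
      (∀ j, A j = 1 ∨ A j = Xg ∨ A j = Yg ∨ A j = Zg) ∧ M = kronFam n A }

/-- The `n`-qubit Pauli group (every element has finite order, so the
multiplicative closure coincides with the generated group of unitaries). -/
def PauliGroup (n : ℕ) : Submonoid (QMat n) := Submonoid.closure (PauliSet n)

/-- Level `k` of the Clifford hierarchy: `C_1` is the Pauli group and
`C_{k+1} = { unitary U | ∀ P ∈ P_n, U P U† ∈ C_k }`. -/
def Clifford (n : ℕ) : ℕ → Set (QMat n)
  | 0 => (PauliGroup n : Set (QMat n))
  | 1 => (PauliGroup n : Set (QMat n))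
  | (k + 2) => { U | U ∈ Matrix.unitaryGroup (Fin n → Fin 2) ℂ ∧
      ∀ P ∈ PauliGroup n, U * P * Uᴴ ∈ Clifford n (k + 1) }

end

/-- The group generated by `Z⁽¹⁾, …, Z⁽ⁿ⁻¹⁾, X⁽ⁿ⁾` (generators are involutions, so the
multiplicative closure is a group). -/
def Glocal (n : ℕ) (hn : 0 < n) : Submonoid (QMat n) :=
  Submonoid.closure
    ({ M | ∃ j : Fin (n - 1), M = onQubit n Zg (Fin.castLE (Nat.sub_le n 1) j) } ∪
      {onQubit n Xg ⟨n - 1, by omega⟩})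

section SnAux
variable {n : ℕ}

noncomputable def mono (n : ℕ) (π : (Fin n → Fin 2) → (Fin n → Fin 2))
    (ε : (Fin n → Fin 2) → ℂ) : QMat n :=
  fun v w => if v = π w then ε w else 0

theorem mono_mul (π₁ π₂ : (Fin n → Fin 2) → (Fin n → Fin 2)) (ε₁ ε₂) :
    mono n π₁ ε₁ * mono n π₂ ε₂ = mono n (π₁ ∘ π₂) (fun w => ε₁ (π₂ w) * ε₂ w) := by
  ext v w
  simp only [Matrix.mul_apply, mono, Function.comp]
  have key : ∀ x, (if v = π₁ x then ε₁ x else 0) * (if x = π₂ w then ε₂ w else 0)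
      = if x = π₂ w then (if v = π₁ (π₂ w) then ε₁ (π₂ w) * ε₂ w else 0) else 0 := by
    intro x
    by_cases hx : x = π₂ w
    · rw [if_pos hx, hx]
      by_cases hv : v = π₁ (π₂ w) <;> simp [hv]
    · simp [hx]
  simp only [key]
  rw [Finset.sum_ite_eq' Finset.univ (π₂ w)
    (fun _ => if v = π₁ (π₂ w) then ε₁ (π₂ w) * ε₂ w else 0)]
  simp

theorem mono_congr {π₁ π₂ : (Fin n → Fin 2) → (Fin n → Fin 2)} {ε₁ ε₂}
    (hπ : ∀ w, π₁ w = π₂ w) (hε : ∀ w, ε₁ w = ε₂ w) :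
    mono n π₁ ε₁ = mono n π₂ ε₂ := by
  rw [funext hπ, funext hε]

theorem mono_one : mono n id (fun _ => 1) = 1 := by
  ext v w; simp [mono, Matrix.one_apply]

theorem fin2_add_add : ∀ a b : Fin 2, a + b + b = a := by decide

theorem CNOT_mono (c t : Fin n) :
    CNOT n c t = mono n (fun w j => if j = t then w t + w c else w j) (fun _ => 1) := by
  ext v w
  have h : Function.update w t (w t + w c) = fun j => if j = t then w t + w c else w j := by
    funext j
    by_cases h : j = t <;> simp [Function.update_apply, h]
  simp only [CNOT, mono, h]

theorem CNOT_invol (c t : Fin n) (h : c ≠ t) : CNOT n c t * CNOT n c t = 1 := by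
  rw [CNOT_mono, mono_mul, ← mono_one]
  refine mono_congr (fun w => ?_) (fun w => by norm_num)
  funext j
  show (if j = t
      then (if t = t then w t + w c else w t) + (if c = t then w t + w c else w c)
      else if j = t then w t + w c else w j) = w j
  by_cases hj : j = t
  · rw [if_pos hj, if_pos rfl, if_neg h, hj]
    exact fin2_add_add _ _
  · rw [if_neg hj, if_neg hj]

noncomputable def Cfun (n k : ℕ) : QMat n :=
  if h : k + 1 < n then CNOT n ⟨k + 1, h⟩ ⟨k, by omega⟩ else 1

theorem Sn_range : Sn n = ((List.range (n - 1)).map (Cfun n)).prod := by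
  rw [Sn, ← (show (List.finRange (n - 1)).map (fun i : Fin (n - 1) => (i : ℕ)) = List.range (n - 1)
    from List.ext_getElem (by simp) (by simp)), List.map_map]
  congr 1
  refine List.map_congr_left fun j _ => ?_
  have hj : j.1 + 1 < n := by have := j.isLt; omega
  simp only [Function.comp, Cfun, dif_pos hj]

theorem isUnit_Sn : IsUnit (Sn n) := by
  rw [Sn_range]
  refine List.prod_isUnit fun x hx => ?_
  simp only [List.mem_map] at hx
  obtain ⟨k, hk, rfl⟩ := hx
  unfold Cfun
  split
  · next h =>
    have hinv := CNOT_invol ⟨k + 1, h⟩ ⟨k, by omega⟩ (by simp [Fin.ext_iff])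
    exact ⟨⟨_, _, hinv, hinv⟩, rfl⟩
  · exact isUnit_one

theorem push {M : Type*} [Monoid M] (C B : ℕ → M) (m : ℕ)
    (h : ∀ k < m, C k * B (k + 1) = B k * C k) :
    ((List.range m).map C).prod * B m = B 0 * ((List.range m).map C).prod := by
  induction m with
  | zero => simp
  | succ m ih =>
    rw [List.range_succ, List.map_append, List.prod_append]
    simp only [List.map_cons, List.map_nil, List.prod_cons, List.prod_nil, mul_one]
    rw [mul_assoc, h m (Nat.lt_succ_self m), ← mul_assoc,
      ih (fun k hk => h k (Nat.lt_succ_of_lt hk)), mul_assoc]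

end SnAux
section SnAux2
variable {n : ℕ}

noncomputable def χ : Fin 2 → ℂ := fun b => if b = 0 then 1 else -1

theorem χ_add (a b : Fin 2) : χ (a + b) = χ a * χ b := by
  fin_cases a <;> fin_cases b <;> simp [χ, Fin.ext_iff]

theorem χ_mul_self (a : Fin 2) : χ a * χ a = 1 := by
  fin_cases a <;> simp [χ]

theorem Zg_apply (a b : Fin 2) : Zg a b = if a = b then χ b else 0 := by
  fin_cases a <;> fin_cases b <;> simp [Zg, χ, Fin.ext_iff]

theorem Xg_apply (a b : Fin 2) : Xg a b = if a = b + 1 then 1 else 0 := by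
  fin_cases a <;> fin_cases b <;> simp [Xg, Fin.ext_iff]

theorem kron_mono (σ : Fin n → Fin 2 → Fin 2) (ε : Fin n → Fin 2 → ℂ)
    (A : Fin n → Matrix (Fin 2) (Fin 2) ℂ)
    (hA : ∀ j a b, A j a b = if a = σ j b then ε j b else 0) :
    kronFam n A = mono n (fun w j => σ j (w j)) (fun w => ∏ j, ε j (w j)) := by
  ext v w
  simp only [kronFam, mono, hA]
  by_cases h : v = fun j => σ j (w j)
  · rw [if_pos h]
    refine Finset.prod_congr rfl fun j _ => ?_
    rw [if_pos (by rw [h])]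
  · rw [if_neg h]
    obtain ⟨j, hj⟩ := Function.ne_iff.mp h
    exact Finset.prod_eq_zero (Finset.mem_univ j) (if_neg hj)

theorem onQubit_Zg (i : Fin n) :
    onQubit n Zg i = mono n id (fun w => χ (w i)) := by
  rw [onQubit, kron_mono (fun _ b => b) (fun j b => if j = i then χ b else 1)]
  · exact mono_congr (fun w => rfl) (fun w => by simp)
  · intro j a b
    by_cases h : j = i <;> simp [h, Zg_apply, Matrix.one_apply]

theorem onQubit_Xg (i : Fin n) :
    onQubit n Xg i = mono n (fun w j => if j = i then w j + 1 else w j) (fun _ => 1) := by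
  rw [onQubit, kron_mono (fun j b => if j = i then b + 1 else b) (fun _ _ => 1)]
  · exact mono_congr (fun w => by funext j; by_cases h : j = i <;> simp [h]) (fun w => by simp)
  · intro j a b
    by_cases h : j = i <;> simp [h, Xg_apply, Matrix.one_apply]

theorem XXn_mono : XXn n = mono n (fun w j => w j + 1) (fun _ => 1) := by
  rw [XXn, kron_mono (fun _ b => b + 1) (fun _ _ => 1)]
  · exact mono_congr (fun w => rfl) (fun w => by simp)
  · intro j a b; exact Xg_apply a b

theorem ZZ_mono (j : Fin (n - 1)) :
    ZZ n j = mono n id (fun w =>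
      χ (w ⟨j.1, by have := j.isLt; omega⟩) * χ (w ⟨j.1 + 1, by have := j.isLt; omega⟩)) := by
  rw [ZZ, onQubit_Zg, onQubit_Zg, mono_mul]
  exact mono_congr (fun w => rfl) (fun w => rfl)

end SnAux2
section SnAux3
variable {n : ℕ}

set_option maxHeartbeats 1000000 in
theorem K1 (hn : 2 ≤ n) (j : Fin (n - 1)) :
    Sn n * onQubit n Zg (Fin.castLE (Nat.sub_le n 1) j) = ZZ n j * Sn n := by
  have hJ : j.1 < n - 1 := j.isLt
  rw [Sn_range]
  have key := push (Cfun n)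
    (fun k => if k ≤ j.1 then ZZ n j else onQubit n Zg (Fin.castLE (Nat.sub_le n 1) j))
    (n - 1) ?_
  · have h1 : ¬ (n - 1 ≤ j.1) := by omega
    simpa only [if_neg h1, if_pos (Nat.zero_le _)] using key
  · intro k hk
    have hkn : k + 1 < n := by omega
    have hcast : Fin.castLE (Nat.sub_le n 1) j = (⟨j.1, by omega⟩ : Fin n) := rfl
    simp only [Cfun, dif_pos hkn, hcast]
    rcases lt_trichotomy k j.1 with hlt | heq | hgt
    · rw [if_pos (by omega : k ≤ j.1), if_pos (by omega : k + 1 ≤ j.1)]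
      rw [CNOT_mono, ZZ_mono, mono_mul, mono_mul]
      refine mono_congr (fun w => rfl) (fun w => ?_)
      have e1 : ((⟨j.1, by omega⟩ : Fin n) = ⟨k, by omega⟩) = False := by
        simp [Fin.ext_iff]; omega
      have e2 : ((⟨j.1 + 1, by omega⟩ : Fin n) = ⟨k, by omega⟩) = False := by
        simp [Fin.ext_iff]; omega
      simp only [id_eq, one_mul, mul_one, e1, e2, if_false]
    · rw [if_pos (by omega : k ≤ j.1), if_neg (by omega : ¬ (k + 1 ≤ j.1))]
      rw [CNOT_mono, ZZ_mono, onQubit_Zg, mono_mul, mono_mul]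
      refine mono_congr (fun w => rfl) (fun w => ?_)
      have e1 : ((⟨j.1, by omega⟩ : Fin n) = ⟨k, by omega⟩) = True := by
        simp [Fin.ext_iff]; omega
      have e2 : ((⟨j.1 + 1, by omega⟩ : Fin n) = ⟨k, by omega⟩) = False := by
        simp [Fin.ext_iff]; omega
      have e3 : (⟨j.1, by omega⟩ : Fin n) = ⟨k, by omega⟩ := by
        simp [Fin.ext_iff]; omega
      have e4 : (⟨j.1 + 1, by omega⟩ : Fin n) = ⟨k + 1, by omega⟩ := by
        simp [Fin.ext_iff]; omega
      simp only [id_eq, one_mul, mul_one, e1, e2, if_true, if_false]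
      rw [e3, e4, χ_add, mul_assoc, χ_mul_self, mul_one]
    · rw [if_neg (by omega : ¬ (k ≤ j.1)), if_neg (by omega : ¬ (k + 1 ≤ j.1))]
      rw [CNOT_mono, onQubit_Zg, mono_mul, mono_mul]
      refine mono_congr (fun w => rfl) (fun w => ?_)
      have e1 : ((⟨j.1, by omega⟩ : Fin n) = ⟨k, by omega⟩) = False := by
        simp [Fin.ext_iff]; omega
      simp only [id_eq, one_mul, mul_one, e1, if_false]

end SnAux3
section SnAux4
variable {n : ℕ}

set_option maxHeartbeats 1000000 in
theorem K2 (hn : 2 ≤ n) :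
    Sn n * onQubit n Xg ⟨n - 1, by omega⟩ = XXn n * Sn n := by
  rw [Sn_range]
  have key := push (Cfun n)
    (fun k => mono n (fun w j => if k ≤ j.1 then w j + 1 else w j) (fun _ => 1))
    (n - 1) ?_
  · have hB : onQubit n Xg ⟨n - 1, by omega⟩ =
        mono n (fun w j => if n - 1 ≤ j.1 then w j + 1 else w j) (fun _ => 1) := by
      rw [onQubit_Xg]
      refine mono_congr (fun w => ?_) (fun _ => rfl)
      funext j
      have hiff : (j = (⟨n - 1, by omega⟩ : Fin n)) ↔ (n - 1 ≤ j.1) := by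
        rw [Fin.ext_iff]
        simp only [Fin.val_mk]
        have := j.isLt
        constructor <;> intro h <;> omega
      by_cases h : n - 1 ≤ j.1
      · rw [if_pos (hiff.mpr h), if_pos h]
      · rw [if_neg (fun hh => h (hiff.mp hh)), if_neg h]
    have hB0 : XXn n =
        mono n (fun w j => if 0 ≤ j.1 then w j + 1 else w j) (fun _ => 1) := by
      rw [XXn_mono]
      exact mono_congr (fun w => by funext j; rw [if_pos (Nat.zero_le _)]) (fun _ => rfl)
    rw [hB, hB0]
    exact key
  · intro k hk
    have hkn : k + 1 < n := by omega
    simp only [Cfun, dif_pos hkn]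
    rw [CNOT_mono, mono_mul, mono_mul]
    refine mono_congr (fun w => ?_) (fun w => rfl)
    funext i
    show (if i = (⟨k, by omega⟩ : Fin n)
        then (if k + 1 ≤ ((⟨k, by omega⟩ : Fin n) : ℕ) then w ⟨k, by omega⟩ + 1 else w ⟨k, by omega⟩)
          + (if k + 1 ≤ ((⟨k + 1, hkn⟩ : Fin n) : ℕ) then w ⟨k + 1, hkn⟩ + 1 else w ⟨k + 1, hkn⟩)
        else (if k + 1 ≤ (i : ℕ) then w i + 1 else w i))
      = (if k ≤ (i : ℕ)
        then (if i = (⟨k, by omega⟩ : Fin n) then w ⟨k, by omega⟩ + w ⟨k + 1, hkn⟩ else w i) + 1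
        else (if i = (⟨k, by omega⟩ : Fin n) then w ⟨k, by omega⟩ + w ⟨k + 1, hkn⟩ else w i))
    by_cases hi : i = (⟨k, by omega⟩ : Fin n)
    · have hv : (i : ℕ) = k := by rw [hi]
      rw [if_pos hi, if_pos hi, if_pos (by omega : k ≤ (i : ℕ))]
      rw [if_neg (by show ¬ (k + 1 ≤ k); omega), if_pos (by show k + 1 ≤ k + 1; omega)]
      exact (add_assoc _ _ _).symm
    · have hv : (i : ℕ) ≠ k := fun h => hi (by rw [Fin.ext_iff]; exact h)
      rw [if_neg hi, if_neg hi]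
      by_cases h2 : k ≤ (i : ℕ)
      · rw [if_pos (by omega : k + 1 ≤ (i : ℕ)), if_pos h2]
      · rw [if_neg (by omega : ¬ (k + 1 ≤ (i : ℕ))), if_neg h2]

end SnAux4
/-- Conjugation by a unit, as a multiplicative automorphism of a monoid. -/
noncomputable def conjEquiv {M : Type*} [Monoid M] (u : Mˣ) : M ≃* M where
  toFun x := ↑u * x * ↑u⁻¹
  invFun x := ↑u⁻¹ * x * ↑u
  left_inv x := by simp [mul_assoc]
  right_inv x := by simp [mul_assoc]
  map_mul' x y := by simp [mul_assoc]


/-- Conjugation by `S(n)` maps `⟨Z⁽¹⁾, …, Z⁽ⁿ⁻¹⁾, X⁽ⁿ⁾⟩` onto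
`G⁽ⁿ⁾_tetra`; in particular the two groups are isomorphic. -/
theorem Sn_conjugation_maps_local_group_onto_Gtetra (n : ℕ) (hn : 2 ≤ n) :
    { M : QMat n | ∃ U ∈ Glocal n (by omega), M = Sn n * U * (Sn n)⁻¹ } =
      (Gtetra n : Set (QMat n)) ∧
    Nonempty (Glocal n (by omega) ≃* Gtetra n) := by
  have hn0 : 0 < n := by omega
  have hu : IsUnit (Sn n) := isUnit_Sn
  set u := hu.unit with hudef
  have hucoe : (u : QMat n) = Sn n := hu.unit_spec
  have huinv : ((u⁻¹ : (QMat n)ˣ) : QMat n) = (Sn n)⁻¹ := by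
    rw [Matrix.coe_units_inv, hucoe]
  set e : QMat n ≃* QMat n := conjEquiv u with hedef
  have he : ∀ A : QMat n, e A = Sn n * A * (Sn n)⁻¹ := by
    intro A
    show (u : QMat n) * A * ↑u⁻¹ = _
    rw [hucoe, huinv]
  have hcoe : ∀ A : QMat n, (e : QMat n →* QMat n) A = e A := fun _ => rfl
  have conj_eq : ∀ A B : QMat n, Sn n * A = B * Sn n → e A = B := by
    intro A B h
    show (u : QMat n) * A * ↑u⁻¹ = B
    rw [hucoe, h, mul_assoc, ← hucoe, Units.mul_inv, mul_one]
  have hmap : Submonoid.map (e : QMat n →* QMat n) (Glocal n hn0) = Gtetra n := by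
    rw [Glocal, Gtetra, MonoidHom.map_mclosure]
    congr 1
    rw [Set.image_union, Set.image_singleton]
    congr 1
    · ext x
      constructor
      · rintro ⟨y, ⟨j, rfl⟩, rfl⟩
        exact ⟨j, by rw [hcoe]; exact conj_eq _ _ (K1 hn j)⟩
      · rintro ⟨j, rfl⟩
        exact ⟨_, ⟨j, rfl⟩, by rw [hcoe]; exact conj_eq _ _ (K1 hn j)⟩
    · have h2 : (e : QMat n →* QMat n) (onQubit n Xg ⟨n - 1, by omega⟩) = XXn n := by
        rw [hcoe]; exact conj_eq _ _ (K2 hn)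
      rw [h2]
  constructor
  · rw [← hmap, Submonoid.coe_map]
    ext M
    simp only [Set.mem_setOf_eq, Set.mem_image, SetLike.mem_coe]
    constructor
    · rintro ⟨U, hU, rfl⟩
      exact ⟨U, hU, by rw [hcoe]; exact he U⟩
    · rintro ⟨U, hU, rfl⟩
      exact ⟨U, hU, by rw [hcoe, he U]⟩
  · exact ⟨(MulEquiv.submonoidMap e (Glocal n hn0)).trans (MulEquiv.submonoidCongr hmap)⟩
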